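/- arXiv:2104.10657 — 10 statements merged into one kernel-verified Lean document; each statement's English description precedes it below -/
import Mathlib

section
/- Fix any real λ > 1 and τ > φ(λ), and any integer N ≥ 2. Define φ^N(x) = τ − (N−1)·h(x; λ) for x ∈ [φ(λ), +∞). Then φ^N has a unique fixed point x(N) on [φ(λ), +∞), and this fixed point satisfies φ(λ) < x(N) < τ. -/
/-- `phi l = log (l / (l - 1))` for `l > 1`. -/
noncomputable def phi (l : ℝ) : ℝ := Real.log (l / (l - 1))

/-- `h x l = (1/l) * log ((l - 1) * (exp x - 1))`. -/
noncomputable def h (x l : ℝ) : ℝ := (1 / l) * Real.log ((l - 1) * (Real.exp x - 1))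

lemma exp_phi {l : ℝ} (hl : 1 < l) : Real.exp (phi l) = l / (l - 1) := by
  have : (0:ℝ) < l / (l - 1) := div_pos (by linarith) (by linarith)
  simpa [phi] using Real.exp_log this

lemma arg_ge {l x : ℝ} (hl : 1 < l) (hx : phi l ≤ x) :
    1 ≤ (l - 1) * (Real.exp x - 1) := by
  have h1 : l / (l - 1) ≤ Real.exp x := by
    rw [← exp_phi hl]; exact Real.exp_le_exp.2 hx
  have hl1 : (0:ℝ) < l - 1 := by linarith
  have : l / (l - 1) * (l - 1) = l := by field_simp
  nlinarith

lemma arg_gt {l x : ℝ} (hl : 1 < l) (hx : phi l < x) :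
    1 < (l - 1) * (Real.exp x - 1) := by
  have h1 : l / (l - 1) < Real.exp x := by
    rw [← exp_phi hl]; exact Real.exp_lt_exp.2 hx
  have hl1 : (0:ℝ) < l - 1 := by linarith
  have : l / (l - 1) * (l - 1) = l := by field_simp
  nlinarith

lemma h_phi {l : ℝ} (hl : 1 < l) : h (phi l) l = 0 := by
  have hl1 : (0:ℝ) < l - 1 := by linarith
  have : (l - 1) * (Real.exp (phi l) - 1) = 1 := by
    rw [exp_phi hl]; field_simp; ring
  simp [h, this]

lemma h_strictMono {l a b : ℝ} (hl : 1 < l) (ha : phi l ≤ a) (hab : a < b) :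
    h a l < h b l := by
  have h1 : 1 ≤ (l - 1) * (Real.exp a - 1) := arg_ge hl ha
  have h2 : (l - 1) * (Real.exp a - 1) < (l - 1) * (Real.exp b - 1) := by
    have := Real.exp_lt_exp.2 hab
    nlinarith
  have hlog := Real.log_lt_log (by linarith) h2
  have hlpos : (0:ℝ) < 1 / l := by positivity
  exact mul_lt_mul_of_pos_left hlog hlpos

/-- for `λ > 1`, `τ > φ(λ)` and integer `N ≥ 2`, the map
`x ↦ τ − (N−1)·h(x; λ)` has a unique fixed point on `[φ(λ), ∞)`, which lies in `(φ(λ), τ)`. -/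
theorem varphi_fixed_point {l τ : ℝ} (hl : 1 < l) (hτ : phi l < τ) (N : ℕ) (hN : 2 ≤ N) :
    ∃ x : ℝ, (phi l < x ∧ x < τ) ∧ τ - ((N : ℝ) - 1) * h x l = x ∧
      ∀ y ∈ Set.Ici (phi l), τ - ((N : ℝ) - 1) * h y l = y → y = x := by
  set c : ℝ := (N : ℝ) - 1 with hc
  have hc1 : (1:ℝ) ≤ c := by
    have : (2:ℝ) ≤ (N:ℝ) := by exact_mod_cast hN
    simp [hc]; linarith
  set g : ℝ → ℝ := fun x => τ - c * h x l - x with hg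
  have hgcont : ContinuousOn g (Set.Icc (phi l) τ) := by
    apply ContinuousOn.sub _ continuousOn_id
    apply ContinuousOn.sub continuousOn_const
    apply ContinuousOn.mul continuousOn_const
    unfold h
    apply ContinuousOn.mul continuousOn_const
    apply ContinuousOn.log
    · fun_prop
    · intro x hx
      have := arg_ge hl hx.1
      linarith
  have hgphi : g (phi l) = τ - phi l := by simp [hg, h_phi hl]
  have hgτ : g τ < 0 := by
    have hpos : 0 < h τ l := by
      have := arg_gt hl hτ
      have : 0 < Real.log ((l - 1) * (Real.exp τ - 1)) := Real.log_pos this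
      have hlpos : (0:ℝ) < 1 / l := by positivity
      unfold h; positivity
    simp only [hg]
    nlinarith
  have h0 : (0:ℝ) ∈ Set.Ioo (g τ) (g (phi l)) := ⟨hgτ, by rw [hgphi]; linarith⟩
  have := intermediate_value_Ioo' (le_of_lt hτ) hgcont h0
  obtain ⟨x, hx, hgx⟩ := this
  refine ⟨x, ⟨hx.1, hx.2⟩, by simp only [hg] at hgx; linarith, ?_⟩
  intro y hy hyfix
  have hxfix : τ - c * h x l = x := by simp only [hg] at hgx; linarith
  rcases lt_trichotomy y x with hlt | heq | hgt
  · exfalso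
    have := h_strictMono hl hy hlt
    nlinarith
  · exact heq
  · exfalso
    have := h_strictMono hl (le_of_lt hx.1) hgt
    nlinarith
end

section
/- Fix any real λ > 1 and τ > φ(λ). For each integer N ≥ 2, let x(N) denote the unique fixed point in [φ(λ), +∞) of the map x ↦ τ − (N−1)·h(x; λ). Then x(N) → φ(λ) as N → +∞. -/
/-- the fixed points `x(N)` of `x ↦ τ − (N−1)·h(x; λ)` on `[φ(λ), ∞)`
converge to `φ(λ)` as `N → ∞`. -/
theorem fixed_point_tendsto_phi {l τ : ℝ} (hl : 1 < l) (hτ : phi l < τ)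
    (x : ℕ → ℝ) (hx : ∀ N, 2 ≤ N → x N ∈ Set.Ici (phi l) ∧
      τ - ((N : ℝ) - 1) * h (x N) l = x N) :
    Filter.Tendsto x Filter.atTop (nhds (phi l)) := by
  have hl0 : (0:ℝ) < l := lt_trans one_pos hl
  have hl1 : (0:ℝ) < l - 1 := by linarith
  have hexp : Real.exp (phi l) = l / (l - 1) := by
    rw [phi, Real.exp_log (by positivity)]
  have harg : (l - 1) * (Real.exp (phi l) - 1) = 1 := by
    rw [hexp]; field_simp; ring
  have hargmono : ∀ a, phi l ≤ a → (1:ℝ) ≤ (l - 1) * (Real.exp a - 1) := by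
    intro a ha
    calc (1:ℝ) = (l - 1) * (Real.exp (phi l) - 1) := harg.symm
      _ ≤ (l - 1) * (Real.exp a - 1) := by
          have := Real.exp_le_exp.mpr ha
          nlinarith
  rw [Metric.tendsto_atTop]
  intro ε hε
  -- δ = h (phi l + ε) l > 0
  set δ := h (phi l + ε) l with hδdef
  have hδpos : 0 < δ := by
    have h1 : (1:ℝ) < (l - 1) * (Real.exp (phi l + ε) - 1) := by
      have := Real.exp_lt_exp.mpr (show phi l < phi l + ε by linarith)
      nlinarith
    have := Real.log_pos h1
    rw [hδdef, h]
    positivity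
  obtain ⟨M, hM⟩ := exists_nat_gt ((τ - phi l) / δ + 2)
  refine ⟨M, fun n hn => ?_⟩
  have hn2 : 2 ≤ n := by
    have : (2:ℝ) ≤ M := by
      have h0 : 0 ≤ (τ - phi l) / δ := div_nonneg (by linarith) hδpos.le
      linarith
    have h2M : 2 ≤ M := by exact_mod_cast this
    exact le_trans h2M hn
  obtain ⟨hge, hfix⟩ := hx n hn2
  have hge' : phi l ≤ x n := hge
  -- show x n < phi l + ε
  have hlt : x n < phi l + ε := by
    by_contra hcon
    push_neg at hcon
    have hδle : δ ≤ h (x n) l := by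
      rw [hδdef, h, h]
      have h1 := hargmono (phi l + ε) (by linarith)
      have h2 := Real.exp_le_exp.mpr hcon
      have hlog := Real.log_le_log (by linarith)
        (show (l-1)*(Real.exp (phi l + ε) -1) ≤ (l-1)*(Real.exp (x n) -1) by nlinarith)
      have : (0:ℝ) < 1 / l := by positivity
      exact mul_le_mul_of_nonneg_left hlog this.le
    have hNδ : ((n:ℝ) - 1) * δ ≤ τ - x n := by
      have : ((n:ℝ) - 1) * h (x n) l = τ - x n := by linarith
      have hn1 : (0:ℝ) ≤ (n:ℝ) - 1 := by
        have : (2:ℝ) ≤ n := by exact_mod_cast hn2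
        linarith
      nlinarith [mul_le_mul_of_nonneg_left hδle hn1]
    have hMn : ((τ - phi l) / δ + 2) < (n:ℝ) := lt_of_lt_of_le hM (by exact_mod_cast hn)
    have : (τ - phi l) / δ < (n:ℝ) - 1 := by linarith
    have h3 : τ - phi l < ((n:ℝ) - 1) * δ := by
      have := (div_lt_iff₀ hδpos).mp this
      linarith
    linarith
  rw [Real.dist_eq, abs_lt]
  constructor <;> linarith
end

section
/- Fix any integer N ≥ 2 and reals g_1, …, g_N ∈ (0,1). Let A_N = I_N + G_N, where G_N is the N×N matrix with zero diagonal and off-diagonal entries [G_N]_{i,j} = g_j for i ≠ j. Then det(A_N) = 1 + Σ_{s=1}^{N} (−1)^{s−1} (s−1) Σ_{S ⊆ {1,…,N}, |S| = s} Π_{k ∈ S} g_k. -/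
open Matrix Finset

/-- Expansion of a product of `(1 - g k)` over subsets. -/
lemma det_A_formula_expand_prod {N : ℕ} (g : Fin N → ℝ) (t : Finset (Fin N)) :
    ∏ k ∈ t, (1 - g k) = ∑ S ∈ t.powerset, (-1 : ℝ) ^ S.card * ∏ k ∈ S, g k := by
  have : ∀ k ∈ t, (1 : ℝ) - g k = -g k + 1 := fun k _ => by ring
  rw [Finset.prod_congr rfl this, Finset.prod_add]
  refine Finset.sum_congr rfl fun S hS => ?_
  rw [Finset.prod_const_one, mul_one]
  calc ∏ i ∈ S, -g i = ∏ i ∈ S, (-1) * g i := by simp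
    _ = (-1 : ℝ) ^ S.card * ∏ k ∈ S, g k := by
        rw [Finset.prod_mul_distrib, Finset.prod_const]

/-- determinant formula for `A_N = I_N + G_N`. -/
theorem det_A_formula (N : ℕ) (hN : 2 ≤ N) (g : Fin N → ℝ)
    (hg : ∀ i, g i ∈ Set.Ioo (0 : ℝ) 1)
    (A : Matrix (Fin N) (Fin N) ℝ)
    (hA : ∀ i j, A i j = if i = j then 1 else g j) :
    A.det = 1 + ∑ s ∈ Finset.Icc 1 N, (-1 : ℝ) ^ (s - 1) * ((s : ℝ) - 1) *
      ∑ S ∈ Finset.univ.powersetCard s, ∏ k ∈ S, g k := by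
  have hne : ∀ k, (1 : ℝ) - g k ≠ 0 := fun k => by
    have := (hg k).2; linarith
  -- Step 1: matrix determinant lemma
  have step1 : A.det = (∏ k, (1 - g k)) * (1 + ∑ j, g j * (1 - g j)⁻¹) := by
    have hA' : A = diagonal (fun j => 1 - g j) +
        replicateCol (Fin 1) (fun _ => (1:ℝ)) * replicateRow (Fin 1) g := by
      ext i j
      by_cases h : i = j <;>
        simp [hA, Matrix.mul_apply, diagonal, h]
    have hdet : IsUnit (diagonal (fun j => 1 - g j)).det := by
      rw [det_diagonal]
      exact (Finset.prod_ne_zero_iff.2 fun k _ => hne k).isUnit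
    have hinv : (diagonal (fun j => 1 - g j))⁻¹ = diagonal (fun j => (1 - g j)⁻¹) := by
      apply inv_eq_right_inv
      rw [diagonal_mul_diagonal]
      convert diagonal_one using 2
      ext j
      exact mul_inv_cancel₀ (hne j)
    rw [hA']
    erw [Matrix.det_add_replicateCol_mul_replicateRow (ι := Fin 1) hdet]
    rw [det_diagonal, hinv]
    congr 1
    have h0 : ∀ (inst : DecidableEq (Fin 1)) (M : Matrix (Fin 1) (Fin 1) ℝ),
        @det _ inst _ ℝ _ M = M 0 0 := by
      intro inst M
      rw [Subsingleton.elim inst (instDecidableEqFin 1)]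
      exact det_fin_one M
    erw [h0]
    simp [Matrix.mul_apply, Matrix.diagonal_apply, Matrix.one_apply, mul_comm]
  -- Step 2: clear denominators
  have step2 : (∏ k, (1 - g k)) * (1 + ∑ j, g j * (1 - g j)⁻¹) =
      (∏ k, (1 - g k)) + ∑ j, g j * ∏ k ∈ univ.erase j, (1 - g k) := by
    rw [mul_add, mul_one, Finset.mul_sum]
    congr 1
    refine Finset.sum_congr rfl fun j _ => ?_
    rw [← Finset.mul_prod_erase univ _ (Finset.mem_univ j)]
    have h1 : (1 - g j) * (1 - g j)⁻¹ = 1 := mul_inv_cancel₀ (hne j)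
    linear_combination (g j * ∏ k ∈ univ.erase j, (1 - g k)) * h1
  rw [step1, step2]
  -- Step 3: combinatorial identity
  set h : Finset (Fin N) → ℝ := fun T => (-1 : ℝ) ^ (T.card - 1) * ∏ k ∈ T, g k with hh
  have claim1 : ∀ j : Fin N,
      g j * ∏ k ∈ univ.erase j, (1 - g k) =
      ∑ T ∈ univ.powerset.filter (fun T => j ∈ T), h T := by
    intro j
    rw [det_A_formula_expand_prod, Finset.mul_sum]
    refine Finset.sum_nbij' (fun t => insert j t) (fun T => T.erase j) ?_ ?_ ?_ ?_ ?_
    · intro t ht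
      simp only [Finset.mem_powerset, Finset.mem_filter] at *
      exact ⟨Finset.subset_univ _, Finset.mem_insert_self _ _⟩
    · intro T hT
      simp only [Finset.mem_powerset, Finset.mem_filter] at *
      intro x hx
      simp only [Finset.mem_erase] at hx ⊢
      exact ⟨hx.1, Finset.mem_univ x⟩
    · intro t ht
      simp only [Finset.mem_powerset] at ht
      have hj : j ∉ t := fun hj => (Finset.mem_erase.1 (ht hj)).1 rfl
      show (insert j t).erase j = t
      rw [Finset.erase_insert hj]
    · intro T hT
      simp only [Finset.mem_powerset, Finset.mem_filter] at hT
      show insert j (T.erase j) = T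
      rw [Finset.insert_erase hT.2]
    · intro t ht
      simp only [Finset.mem_powerset] at ht
      have hj : j ∉ t := fun hj => (Finset.mem_erase.1 (ht hj)).1 rfl
      rw [hh]
      simp only [Finset.card_insert_of_notMem hj, Nat.add_sub_cancel,
        Finset.prod_insert hj]
      ring
  have claim2 : (∑ j, g j * ∏ k ∈ univ.erase j, (1 - g k)) =
      ∑ T ∈ univ.powerset, (T.card : ℝ) * h T := by
    simp_rw [claim1, Finset.sum_filter]
    rw [Finset.sum_comm]
    refine Finset.sum_congr rfl fun T _ => ?_
    rw [Finset.sum_ite_mem, Finset.univ_inter, Finset.sum_const, nsmul_eq_mul]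
  rw [det_A_formula_expand_prod g univ, claim2, ← Finset.sum_add_distrib]
  have key : ∑ T ∈ univ.powerset, ((-1 : ℝ) ^ T.card * ∏ k ∈ T, g k + (T.card : ℝ) * h T)
      = ∑ T ∈ univ.powerset,
        (((-1 : ℝ) ^ T.card + (T.card : ℝ) * (-1 : ℝ) ^ (T.card - 1)) * ∏ k ∈ T, g k) := by
    refine Finset.sum_congr rfl fun T _ => ?_
    rw [hh]; ring
  rw [key, Finset.sum_powerset]
  have hcard : #(univ : Finset (Fin N)) = N := by simp
  rw [hcard]
  have hsplit : Finset.range (N + 1) = insert 0 (Finset.Icc 1 N) := by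
    ext x; simp [Finset.mem_range, Finset.mem_Icc]; omega
  rw [hsplit, Finset.sum_insert (by simp)]
  congr 1
  · simp [Finset.powersetCard_zero]
  · refine Finset.sum_congr rfl fun s hs => ?_
    have hs1 : 1 ≤ s := (Finset.mem_Icc.1 hs).1
    obtain ⟨t, rfl⟩ : ∃ t, s = t + 1 := ⟨s - 1, by omega⟩
    have : ∀ T ∈ Finset.powersetCard (t + 1) (univ : Finset (Fin N)),
        (((-1 : ℝ) ^ T.card + (T.card : ℝ) * (-1 : ℝ) ^ (T.card - 1)) * ∏ k ∈ T, g k)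
        = ((-1 : ℝ) ^ t * ((t + 1 : ℝ) - 1)) * ∏ k ∈ T, g k := by
      intro T hT
      have : T.card = t + 1 := (Finset.mem_powersetCard.1 hT).2
      rw [this]
      push_cast
      ring
    rw [Finset.sum_congr rfl this, ← Finset.mul_sum]
    simp only [Nat.add_sub_cancel]
    push_cast
    ring
end

section
/- Fix any integer N ≥ 2 and reals g_1, …, g_N ∈ (0,1). Let A_N = I_N + G_N, where G_N is the N×N matrix with zero diagonal and off-diagonal entries [G_N]_{i,j} = g_j for i ≠ j. Then for every i ∈ {1,…,N}, the (i,i) entry of A_N⁻¹ satisfies [A_N⁻¹]_{i,i} · det(A_N) = 1 + Σ_{s=1}^{N−1} (−1)^{s−1} (s−1) Σ_{S ⊆ {1,…,N}∖{i}, |S| = s} Π_{k ∈ S} g_k, and [A_N⁻¹]_{i,i} > 0. -/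
open Matrix Finset

lemma aux_u {N : ℕ} (g : Fin N → ℝ) (T : Finset (Fin N)) :
    ∑ S ∈ T.powerset, (-1:ℝ)^S.card * ∏ k ∈ S, g k = ∏ k ∈ T, (1 - g k) := by
  induction T using Finset.induction with
  | empty => simp
  | @insert _ _ ha ih =>
    rw [Finset.sum_powerset_insert ha, Finset.prod_insert ha, ← ih]
    rw [Finset.mul_sum, ← Finset.sum_add_distrib]
    refine Finset.sum_congr rfl fun S hS => ?_
    rw [Finset.mem_powerset] at hS
    have haS : _ ∉ S := fun h => ha (hS h)
    rw [Finset.card_insert_of_notMem haS, Finset.prod_insert haS]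
    ring

lemma aux_w {N : ℕ} (g : Fin N → ℝ) (T : Finset (Fin N)) :
    ∑ S ∈ T.powerset, (-1:ℝ)^S.card * S.card * ∏ k ∈ S, g k
      = -∑ j ∈ T, g j * ∏ k ∈ T.erase j, (1 - g k) := by
  induction T using Finset.induction with
  | empty => simp
  | @insert a T ha ih =>
    rw [Finset.sum_powerset_insert ha, Finset.sum_insert ha, Finset.erase_insert ha]
    have h2 : ∑ S ∈ T.powerset, (-1:ℝ)^(insert a S).card * (insert a S).card *
        ∏ k ∈ insert a S, g k
        = -g a * (∑ S ∈ T.powerset, (-1:ℝ)^S.card * S.card * ∏ k ∈ S, g k)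
          - g a * (∑ S ∈ T.powerset, (-1:ℝ)^S.card * ∏ k ∈ S, g k) := by
      rw [Finset.mul_sum, Finset.mul_sum, ← Finset.sum_sub_distrib]
      refine Finset.sum_congr rfl fun S hS => ?_
      rw [Finset.mem_powerset] at hS
      have haS : a ∉ S := fun h => ha (hS h)
      rw [Finset.card_insert_of_notMem haS, Finset.prod_insert haS]
      push_cast
      ring
    have h3 : ∑ j ∈ T, g j * ∏ k ∈ (insert a T).erase j, (1 - g k)
        = (1 - g a) * ∑ j ∈ T, g j * ∏ k ∈ T.erase j, (1 - g k) := by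
      rw [Finset.mul_sum]
      refine Finset.sum_congr rfl fun j hj => ?_
      have hja : j ≠ a := fun h => ha (h ▸ hj)
      rw [Finset.erase_insert_of_ne hja.symm,
        Finset.prod_insert (fun h => ha (Finset.erase_subset _ _ h))]
      ring
    rw [h2, h3, ih, aux_u]
    ring

lemma aux_main {N : ℕ} (g : Fin N → ℝ) (T : Finset (Fin N)) :
    ∑ S ∈ T.powerset, (-1:ℝ)^S.card * (1 - (S.card : ℝ)) * ∏ k ∈ S, g k
      = ∏ k ∈ T, (1 - g k) + ∑ j ∈ T, g j * ∏ k ∈ T.erase j, (1 - g k) := by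
  have : ∀ S : Finset (Fin N), (-1:ℝ)^S.card * (1 - (S.card : ℝ)) * ∏ k ∈ S, g k
      = (-1:ℝ)^S.card * ∏ k ∈ S, g k - (-1:ℝ)^S.card * S.card * ∏ k ∈ S, g k := by
    intro S; ring
  simp_rw [this]
  rw [Finset.sum_sub_distrib, aux_u, aux_w]
  ring


/-- diagonal entries of `A_N⁻¹`. -/
theorem inv_A_diag (N : ℕ) (hN : 2 ≤ N) (g : Fin N → ℝ)
    (hg : ∀ i, g i ∈ Set.Ioo (0 : ℝ) 1)
    (A : Matrix (Fin N) (Fin N) ℝ)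
    (hA : ∀ i j, A i j = if i = j then 1 else g j) :
    ∀ i : Fin N,
      (A⁻¹ i i * A.det = 1 + ∑ s ∈ Finset.Icc 1 (N - 1), (-1 : ℝ) ^ (s - 1) * ((s : ℝ) - 1) *
        ∑ S ∈ (Finset.univ.erase i).powersetCard s, ∏ k ∈ S, g k) ∧
      0 < A⁻¹ i i := by
  have hg0 : ∀ j, 0 < g j := fun j => (hg j).1
  have hg1 : ∀ j, g j < 1 := fun j => (hg j).2
  have hgl : ∀ j, 0 < 1 - g j := fun j => by linarith [hg1 j]
  have hgne : ∀ j, (1 : ℝ) - g j ≠ 0 := fun j => ne_of_gt (hgl j)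
  set K : ℝ := 1 + ∑ j, g j / (1 - g j) with hK
  have hQnn : (0:ℝ) ≤ ∑ j, g j / (1 - g j) :=
    Finset.sum_nonneg fun j _ => div_nonneg (hg0 j).le (hgl j).le
  have hKpos : 0 < K := by rw [hK]; linarith
  have hKne : K ≠ 0 := ne_of_gt hKpos
  clear_value K
  -- determinant
  have hdet : A.det = K * ∏ j, (1 - g j) := by
    have hfac : A = (1 + replicateCol (Fin 1) (fun _ => (1:ℝ)) *
        replicateRow (Fin 1) (fun j => g j / (1 - g j))) * Matrix.diagonal (fun j => 1 - g j) := by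
      ext i j
      rw [Matrix.mul_diagonal, hA]
      simp only [Matrix.add_apply, Matrix.one_apply, Matrix.mul_apply, Matrix.replicateCol_apply,
        Matrix.replicateRow_apply, Fin.sum_univ_one]
      split_ifs with h
      · field_simp [hgne j]
        ring
      · field_simp [hgne j]
        ring
    rw [hfac, det_mul]
    erw [det_one_add_replicateCol_mul_replicateRow (ι := Fin 1)]
    rw [det_diagonal]
    congr 1
    simp [dotProduct, hK]
  -- explicit inverse
  set B : Matrix (Fin N) (Fin N) ℝ :=
    fun i j => (if i = j then (1 - g i)⁻¹ else 0) - g j / ((1 - g i) * (1 - g j) * K) with hB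
  clear_value B
  have hAB : A * B = 1 := by
    ext i j
    rw [Matrix.mul_apply]
    have hAik : ∀ k, A i k = (if i = k then 1 - g k else 0) + g k := by
      intro k; rw [hA]; split_ifs <;> ring
    simp_rw [hAik, add_mul]
    rw [Finset.sum_add_distrib]
    have h1 : ∑ k, (if i = k then 1 - g k else 0) * B k j = (1 - g i) * B i j := by
      simp only [ite_mul, zero_mul]
      rw [Finset.sum_ite_eq Finset.univ i (fun k => (1 - g k) * B k j)]
      simp
    have h2 : ∑ k, g k * B k j = g j / ((1 - g j) * K) := by
      have : ∀ k, g k * B k j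
          = (if k = j then g j * (1 - g j)⁻¹ else 0)
            - (g k / (1 - g k)) * (g j / ((1 - g j) * K)) := by
        intro k
        simp only [hB]
        by_cases h : k = j
        · subst h
          simp only [if_pos rfl, eq_self_iff_true, if_true, div_eq_mul_inv, mul_inv]
          ring
        · simp only [if_neg h, div_eq_mul_inv, mul_inv]
          ring
      simp_rw [this]
      rw [Finset.sum_sub_distrib, Finset.sum_ite_eq' Finset.univ j
        (fun k => g j * (1 - g j)⁻¹), ← Finset.sum_mul]
      have hsum : ∑ k, g k / (1 - g k) = K - 1 := by rw [hK]; ring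
      rw [hsum]
      simp only [Finset.mem_univ, if_pos, if_true, eq_self_iff_true]
      have hKc : K * K⁻¹ = 1 := mul_inv_cancel₀ hKne
      simp only [div_eq_mul_inv, mul_inv]
      linear_combination (-(g j * (1 - g j)⁻¹)) * hKc
    rw [h1, h2]
    simp only [hB, Matrix.one_apply]
    have hKc : K * K⁻¹ = 1 := mul_inv_cancel₀ hKne
    by_cases h : i = j
    · subst h
      have hx : (1 - g i) * (1 - g i)⁻¹ = 1 := mul_inv_cancel₀ (hgne i)
      simp only [if_pos rfl, eq_self_iff_true, if_true, div_eq_mul_inv, mul_inv]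
      linear_combination (1 - g i * (1 - g i)⁻¹ * K⁻¹) * hx
    · have hx : (1 - g i) * (1 - g i)⁻¹ = 1 := mul_inv_cancel₀ (hgne i)
      simp only [if_neg h, div_eq_mul_inv, mul_inv]
      linear_combination (-(g j * (1 - g j)⁻¹ * K⁻¹)) * hx
  have hinv : A⁻¹ = B := Matrix.inv_eq_right_inv hAB
  intro i
  set T : Finset (Fin N) := Finset.univ.erase i with hT
  set P : ℝ := ∏ k ∈ T, (1 - g k) with hP
  set Q : ℝ := ∑ j ∈ T, g j / (1 - g j) with hQ
  have hPpos : 0 < P := Finset.prod_pos fun k _ => hgl k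
  have hQnn' : 0 ≤ Q := Finset.sum_nonneg fun j _ => div_nonneg (hg0 j).le (hgl j).le
  have hPK : ∏ j, (1 - g j) = (1 - g i) * P :=
    (Finset.mul_prod_erase Finset.univ _ (Finset.mem_univ i)).symm
  have hKQ : K = 1 + (g i / (1 - g i) + Q) := by
    rw [hK]
    congr 1
    exact (Finset.add_sum_erase Finset.univ _ (Finset.mem_univ i)).symm
  have hKrel : K * (1 - g i) = 1 + (1 - g i) * Q := by
    have hx : (1 - g i) * (1 - g i)⁻¹ = 1 := mul_inv_cancel₀ (hgne i)
    rw [hKQ]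
    simp only [div_eq_mul_inv]
    linear_combination (g i) * hx
  have hBii : A⁻¹ i i = (1 - g i)⁻¹ - g i / ((1 - g i) * (1 - g i) * K) := by
    rw [hinv]
    simp only [hB, if_pos rfl, eq_self_iff_true, if_true]
  have hmain : A⁻¹ i i * A.det = P * (1 + Q) := by
    rw [hBii, hdet, hPK]
    have e1 : ((1 - g i)⁻¹ - g i / ((1 - g i) * (1 - g i) * K)) * (K * ((1 - g i) * P))
        = (K * (1 - g i) - g i) * P / (1 - g i) := by
      have hx : (1 - g i) * (1 - g i)⁻¹ = 1 := mul_inv_cancel₀ (hgne i)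
      have hKc : K * K⁻¹ = 1 := mul_inv_cancel₀ hKne
      simp only [div_eq_mul_inv, mul_inv]
      linear_combination (-(g i * P * (1 - g i)⁻¹ * K * K⁻¹)) * hx
        + (-(g i * P * (1 - g i)⁻¹)) * hKc
    rw [e1, hKrel, div_eq_iff (hgne i)]
    ring
  have hdetpos : 0 < A.det := by
    rw [hdet, hPK]
    exact mul_pos hKpos (mul_pos (hgl i) hPpos)
  have hMpos : 0 < P * (1 + Q) := mul_pos hPpos (by linarith)
  constructor
  · rw [hmain]
    have hPQ : P * (1 + Q) = ∏ k ∈ T, (1 - g k) + ∑ j ∈ T, g j * ∏ k ∈ T.erase j, (1 - g k) := by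
      rw [mul_add, mul_one, ← hP]
      congr 1
      rw [hQ, Finset.mul_sum]
      refine Finset.sum_congr rfl fun j hj => ?_
      rw [hP, ← Finset.mul_prod_erase T _ hj]
      field_simp [hgne j]
    rw [hPQ, ← aux_main g T]
    have hcard : T.card = N - 1 := by
      rw [hT, Finset.card_erase_of_mem (Finset.mem_univ i), Finset.card_univ, Fintype.card_fin]
    rw [Finset.sum_powerset, hcard]
    have hN1 : N - 1 + 1 = N := by omega
    rw [hN1, Finset.range_eq_Ico, Finset.sum_eq_sum_Ico_succ_bot (by omega : 0 < N)]
    have hIco : Finset.Ico 1 N = Finset.Icc 1 (N - 1) := by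
      ext x; simp only [Finset.mem_Ico, Finset.mem_Icc]; omega
    rw [hIco]
    congr 1
    · simp
    · refine Finset.sum_congr rfl fun s hs => ?_
      rw [Finset.mem_Icc] at hs
      obtain ⟨t, rfl⟩ : ∃ t, s = t + 1 := ⟨s - 1, by omega⟩
      rw [Finset.mul_sum]
      refine Finset.sum_congr rfl fun S hS => ?_
      rw [(Finset.mem_powersetCard.mp hS).2]
      push_cast
      simp [pow_succ]
  · have := div_pos hMpos hdetpos
    rwa [← hmain, mul_div_assoc, div_self hdetpos.ne', mul_one] at this
end

section
/- Fix any integer N ≥ 2 and reals g_1, …, g_N ∈ (0,1). Let A_N = I_N + G_N, where G_N is the N×N matrix with zero diagonal and off-diagonal entries [G_N]_{i,j} = g_j for i ≠ j. Then for every i ∈ {1,…,N} and every j ∈ {1,…,N} with j ≠ i, the (i,j) entry of A_N⁻¹ equals [A_N⁻¹]_{i,j} = (1/det(A_N)) · (−1)^{N−1} · g_j · Π_{k ∈ {1,…,N}∖{i,j}} (g_k − 1), and [A_N⁻¹]_{i,j} < 0. -/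
set_option maxHeartbeats 1000000

open Matrix Finset

/-- off-diagonal entries of `A_N⁻¹`. -/
theorem inv_A_offdiag (N : ℕ) (hN : 2 ≤ N) (g : Fin N → ℝ)
    (hg : ∀ i, g i ∈ Set.Ioo (0 : ℝ) 1)
    (A : Matrix (Fin N) (Fin N) ℝ)
    (hA : ∀ i j, A i j = if i = j then 1 else g j) :
    ∀ i j : Fin N, j ≠ i →
      (A⁻¹ i j = (1 / A.det) * (-1 : ℝ) ^ (N - 1) * g j *
        ∏ k ∈ (Finset.univ.erase i).erase j, (g k - 1)) ∧
      A⁻¹ i j < 0 := by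
  have hNE : Nonempty (Fin N) := ⟨⟨0, by omega⟩⟩
  obtain ⟨d, hd_def⟩ : ∃ d : Fin N → ℝ, ∀ k, d k = 1 - g k := ⟨_, fun _ => rfl⟩
  have hd : ∀ k, 0 < d k := fun k => by
    have := (hg k).2; rw [hd_def]; linarith
  have hdne : ∀ k, d k ≠ 0 := fun k => (hd k).ne'
  obtain ⟨s, hs_def⟩ : ∃ s : ℝ, s = ∑ k, g k * (d k)⁻¹ := ⟨_, rfl⟩
  have hs : 0 < s := by
    rw [hs_def]
    exact Finset.sum_pos (fun k _ => mul_pos (hg k).1 (inv_pos.mpr (hd k)))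
      Finset.univ_nonempty
  obtain ⟨c, hc_def⟩ : ∃ c : ℝ, c = 1 + s := ⟨_, rfl⟩
  have hc : 0 < c := by rw [hc_def]; linarith
  have hcne : c ≠ 0 := hc.ne'
  have hs' : s = c - 1 := by rw [hc_def]; ring
  -- candidate inverse
  obtain ⟨B, hB_def⟩ : ∃ B : Matrix (Fin N) (Fin N) ℝ,
      ∀ i j, B i j = (if i = j then (d i)⁻¹ else 0) - g j / (c * d i * d j) :=
    ⟨fun i j => (if i = j then (d i)⁻¹ else 0) - g j / (c * d i * d j), fun _ _ => rfl⟩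
  have hAB : A * B = 1 := by
    ext i j
    rw [Matrix.mul_apply, Matrix.one_apply]
    have hterm : ∀ k, A i k * B k j =
        (g k * (d k)⁻¹) * (-(g j) / (c * d j)) + (if k = j then g j / d j else 0)
          + (if k = i then d i * B i j else 0) := by
      intro k
      rw [hA, hB_def, hB_def]
      by_cases hik : i = k
      · subst hik
        by_cases hij : i = j
        · subst hij
          simp only [if_pos rfl, ↓reduceIte]
          have h1 := hdne i; rw [hd_def i] at h1 ⊢
          field_simp [h1, hcne]
          ring
        · simp only [if_pos rfl, if_neg hij, if_neg hij, ↓reduceIte]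
          have h1 := hdne i; have h2 := hdne j
          rw [hd_def i] at h1 ⊢
          field_simp [h1, h2, hcne]
          ring
      · by_cases hkj : k = j
        · subst hkj
          simp only [if_neg hik, if_pos rfl, if_neg (Ne.symm hik), ↓reduceIte]
          field_simp [hdne k, hcne]
          ring
        · simp only [if_neg hik, if_neg hkj, if_neg (Ne.symm hik)]
          field_simp [hdne k, hdne j, hcne]
          ring
    rw [Finset.sum_congr rfl (fun k _ => hterm k), Finset.sum_add_distrib,
      Finset.sum_add_distrib, ← Finset.sum_mul,
      Finset.sum_ite_eq' Finset.univ j (fun _ => g j / d j),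
      Finset.sum_ite_eq' Finset.univ i (fun _ => d i * B i j)]
    simp only [Finset.mem_univ, if_true]
    rw [← hs_def, hB_def, hs']
    by_cases hij : i = j
    · subst hij
      simp only [if_pos rfl, ↓reduceIte]
      field_simp [hdne i, hcne]
      ring
    · simp only [if_neg hij]
      field_simp [hdne i, hdne j, hcne]
      ring
  have hinv : A⁻¹ = B := Matrix.inv_eq_right_inv hAB
  -- determinant of A
  have hdet : A.det = (∏ k, d k) * c := by
    have hfact : A = Matrix.diagonal d *
        (1 + Matrix.replicateCol Unit (fun i => (d i)⁻¹) * Matrix.replicateRow Unit g) := by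
      ext i j
      rw [hA, Matrix.diagonal_mul]
      simp only [Matrix.add_apply, Matrix.one_apply, Matrix.mul_apply, Matrix.replicateCol_apply,
        Matrix.replicateRow_apply, Finset.univ_unique, Finset.sum_singleton]
      rcases eq_or_ne i j with h | h
      · subst h
        simp only [if_pos rfl, ↓reduceIte]
        have h1 := hdne i; rw [hd_def i] at h1 ⊢
        field_simp [h1]
        ring
      · simp only [if_neg h]
        simp [mul_zero, ← mul_assoc, mul_inv_cancel₀ (hdne i)]
    rw [hfact, Matrix.det_mul, Matrix.det_diagonal, Matrix.det_one_add_replicateCol_mul_replicateRow]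
    congr 1
    rw [hc_def, hs_def]
    simp [dotProduct, mul_comm]
  intro i j hji
  have hBij : A⁻¹ i j = -(g j) / (c * d i * d j) := by
    rw [hinv, hB_def, if_neg (fun h => hji h.symm), neg_div, zero_sub]
  have hneg : A⁻¹ i j < 0 := by
    rw [hBij]
    apply div_neg_of_neg_of_pos
    · linarith [(hg j).1]
    · exact mul_pos (mul_pos hc (hd i)) (hd j)
  refine ⟨?_, hneg⟩
  have hjmem : j ∈ Finset.univ.erase i := Finset.mem_erase.mpr ⟨hji, Finset.mem_univ j⟩
  have hcard : ((Finset.univ.erase i).erase j).card = N - 2 := by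
    rw [Finset.card_erase_of_mem hjmem, Finset.card_erase_of_mem (Finset.mem_univ i)]
    simp only [Finset.card_univ, Fintype.card_fin]
    omega
  set P : ℝ := ∏ k ∈ (Finset.univ.erase i).erase j, d k with hP_def
  have hPpos : 0 < P := Finset.prod_pos (fun k _ => hd k)
  have hprod_neg : (∏ k ∈ (Finset.univ.erase i).erase j, (g k - 1)) = (-1 : ℝ) ^ (N - 2) * P := by
    have h1 : ∀ k ∈ (Finset.univ.erase i).erase j, g k - 1 = -1 * d k := by
      intro k _; rw [hd_def]; ring
    rw [Finset.prod_congr rfl h1, Finset.prod_mul_distrib, Finset.prod_const, hcard, hP_def]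
  have hprod_all : (∏ k, d k) = d i * (d j * P) := by
    rw [hP_def, ← Finset.mul_prod_erase _ _ (Finset.mem_univ i),
      ← Finset.mul_prod_erase _ _ hjmem]
  have hsign : (-1 : ℝ) ^ (N - 1) * (-1 : ℝ) ^ (N - 2) = -1 := by
    have h1 : N - 1 = (N - 2) + 1 := by omega
    rw [h1, pow_succ, mul_comm ((-1 : ℝ) ^ (N - 2)) (-1), mul_assoc, ← pow_add, ← two_mul,
      pow_mul]
    norm_num
  rw [hBij, hdet, hprod_neg, hprod_all]
  have hre : (1 / (d i * (d j * P) * c)) * (-1 : ℝ) ^ (N - 1) * g j * ((-1 : ℝ) ^ (N - 2) * P) =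
      ((-1 : ℝ) ^ (N - 1) * (-1 : ℝ) ^ (N - 2)) * (g j * P * (1 / (d i * (d j * P) * c))) := by
    ring
  rw [hre, hsign]
  field_simp [hdne i, hdne j, hPpos.ne', hcne]
end

section
/- Fix any integer N ≥ 2 and reals g_1, …, g_N ∈ (0,1). Let A_N = I_N + G_N, where G_N is the N×N matrix with zero diagonal and off-diagonal entries [G_N]_{i,j} = g_j for i ≠ j. Then for every i ∈ {1,…,N}, the i-th row sum of A_N⁻¹ satisfies Σ_{j=1}^{N} [A_N⁻¹]_{i,j} = (1/det(A_N)) · Π_{k ∈ {1,…,N}∖{i}} (1 − g_k), and in particular this row sum is strictly positive. -/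
open Matrix Finset

/-- row sums of `A_N⁻¹`. -/
theorem inv_A_row_sum (N : ℕ) (hN : 2 ≤ N) (g : Fin N → ℝ)
    (hg : ∀ i, g i ∈ Set.Ioo (0 : ℝ) 1)
    (A : Matrix (Fin N) (Fin N) ℝ)
    (hA : ∀ i j, A i j = if i = j then 1 else g j) :
    ∀ i : Fin N,
      (∑ j : Fin N, A⁻¹ i j = (1 / A.det) * ∏ k ∈ Finset.univ.erase i, (1 - g k)) ∧
      0 < ∑ j : Fin N, A⁻¹ i j := by
  have hg0 : ∀ k, 0 < g k := fun k => (hg k).1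
  have hg1 : ∀ k, 0 < 1 - g k := fun k => sub_pos.mpr (hg k).2
  set u : Fin N → ℝ := fun k => (1 - g k)⁻¹ with hu
  set T : ℝ := ∑ k, g k * (1 - g k)⁻¹ with hT
  have hT0 : 0 ≤ T := Finset.sum_nonneg fun k _ => by
    have := hg0 k; have := hg1 k; positivity
  have hTpos : 0 < 1 + T := by linarith
  set P : ℝ := ∏ k, (1 - g k) with hP
  have hPpos : 0 < P := Finset.prod_pos fun k _ => hg1 k
  have hAeq : A = Matrix.diagonal (fun k => 1 - g k) *
      (1 + Matrix.replicateCol (Fin 1) u * Matrix.replicateRow (Fin 1) g) := by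
    ext i j
    rw [hA, Matrix.mul_apply]
    rw [Finset.sum_eq_single i]
    · simp only [Matrix.diagonal_apply_eq, Matrix.add_apply, Matrix.mul_apply,
        Matrix.replicateCol_apply, Matrix.replicateRow_apply, Matrix.one_apply, hu]
      by_cases h : i = j
      · subst h
        simp only [if_pos rfl]
        have := (hg1 i).ne'
        simp only [Finset.univ_unique, Finset.sum_singleton, if_true]
        field_simp
        ring
      · simp only [if_neg h]
        have := (hg1 i).ne'
        simp only [Finset.univ_unique, Finset.sum_singleton, zero_add]
        field_simp
    · intro b _ hb
      simp [Matrix.diagonal_apply_ne' _ hb]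
    · simp
  have hdet : A.det = P * (1 + T) := by
    rw [hAeq, Matrix.det_mul, Matrix.det_diagonal]
    erw [Matrix.det_one_add_replicateCol_mul_replicateRow (ι := Fin 1)]
    congr 1
  have hdetpos : 0 < A.det := by rw [hdet]; positivity
  have hdet_unit : IsUnit A.det := isUnit_iff_ne_zero.mpr hdetpos.ne'
  set x : Fin N → ℝ := fun k => (1 - g k)⁻¹ * (1 + T)⁻¹ with hx
  have hAx : A *ᵥ x = fun _ => 1 := by
    funext i
    have key : ∀ j, A i j * x j = (if j = i then (1 - g i) * x i else 0) + g j * x j := by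
      intro j
      rw [hA]
      by_cases h : j = i
      · subst h; simp [hx]; ring
      · simp [Ne.symm h, h]
    simp only [Matrix.mulVec, dotProduct]
    rw [Finset.sum_congr rfl (fun j _ => key j), Finset.sum_add_distrib,
      Finset.sum_ite_eq' Finset.univ i (fun _ => (1 - g i) * x i)]
    have h1 : (1 - g i) * x i = (1 + T)⁻¹ := by
      rw [hx]; have := (hg1 i).ne'; field_simp
    have h2 : ∑ j, g j * x j = T * (1 + T)⁻¹ := by
      rw [hT, Finset.sum_mul]
      exact Finset.sum_congr rfl fun j _ => by rw [hx]; ring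
    rw [if_pos (Finset.mem_univ i), h1, h2]
    field_simp
  have hinv : A⁻¹ *ᵥ (fun _ => (1:ℝ)) = x := by
    rw [← hAx, Matrix.mulVec_mulVec, Matrix.nonsing_inv_mul A hdet_unit, Matrix.one_mulVec]
  intro i
  have hsum : ∑ j : Fin N, A⁻¹ i j = x i := by
    have := congrFun hinv i
    simpa [Matrix.mulVec, dotProduct] using this
  have hPi : P = (1 - g i) * ∏ k ∈ Finset.univ.erase i, (1 - g k) :=
    (Finset.mul_prod_erase Finset.univ _ (Finset.mem_univ i)).symm
  constructor
  · rw [hsum, hdet, hx, hPi]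
    have h1 := (hg1 i).ne'
    have h2 := hTpos.ne'
    have h3 : (∏ k ∈ Finset.univ.erase i, (1 - g k)) ≠ 0 :=
      Finset.prod_ne_zero_iff.mpr fun k _ => (hg1 k).ne'
    field_simp
  · rw [hsum, hx]
    have := hg1 i
    positivity
end

section
/- Fix any integer N ≥ 2 and reals g_1, …, g_N ∈ (0,1). Let A_N = I_N + G_N, where G_N is the N×N matrix with zero diagonal and off-diagonal entries [G_N]_{i,j} = g_j for i ≠ j. Then for every i ∈ {1,…,N}, one has [A_N⁻¹]_{i,i} − 1/(1 − g_i) = −g_i · Π_{k ∈ {1,…,N}∖{i}} (1 − g_k) / (det(A_N)·(1 − g_i)); in particular [A_N⁻¹]_{i,i} < 1/(1 − g_i). -/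
open Matrix Finset

private lemma aux_pos (c S : ℝ) (hc : 1 - c ≠ 0) (hS : 1 + S ≠ 0) :
    (1 - c) * (1 / (1 - c) - c / ((1 - c) * (1 - c) * (1 + S)))
      + (c / (1 - c) - c / ((1 - c) * (1 + S)) * S) = 1 := by
  field_simp
  ring

private lemma aux_neg (x y S : ℝ) (hx : 1 - x ≠ 0) (hy : 1 - y ≠ 0) (hS : 1 + S ≠ 0) :
    (1 - x) * (0 / (1 - y) - y / ((1 - x) * (1 - y) * (1 + S)))
      + (y / (1 - y) - y / ((1 - y) * (1 + S)) * S) = 0 := by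
  field_simp
  ring

private lemma aux_main_s15 (c S P : ℝ) (hc : 1 - c ≠ 0) (hS : 1 + S ≠ 0) (hP : P ≠ 0) :
    (1 / (1 - c) - c / ((1 - c) * (1 - c) * (1 + S))) - 1 / (1 - c) =
      -c * P / ((1 - c) * P * (1 + S) * (1 - c)) := by
  field_simp
  ring

/-- comparison of diagonal entries of `A_N⁻¹` with `1/(1 − g_i)`. -/
theorem inv_A_diag_lt (N : ℕ) (hN : 2 ≤ N) (g : Fin N → ℝ)
    (hg : ∀ i, g i ∈ Set.Ioo (0 : ℝ) 1)
    (A : Matrix (Fin N) (Fin N) ℝ)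
    (hA : ∀ i j, A i j = if i = j then 1 else g j) :
    ∀ i : Fin N,
      (A⁻¹ i i - 1 / (1 - g i) =
        -g i * (∏ k ∈ Finset.univ.erase i, (1 - g k)) / (A.det * (1 - g i))) ∧
      A⁻¹ i i < 1 / (1 - g i) := by
  have hpos : ∀ k, 0 < 1 - g k := fun k => by have := (hg k).2; linarith
  have hne : ∀ k, (1 : ℝ) - g k ≠ 0 := fun k => ne_of_gt (hpos k)
  obtain ⟨S, hSdef⟩ : ∃ S : ℝ, S = ∑ k, g k / (1 - g k) := ⟨_, rfl⟩
  have hSnn : 0 ≤ S := hSdef ▸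
    Finset.sum_nonneg fun k _ => div_nonneg (le_of_lt (hg k).1) (le_of_lt (hpos k))
  have h1S : 0 < 1 + S := by linarith
  have h1Sne : (1 : ℝ) + S ≠ 0 := ne_of_gt h1S
  -- the determinant of `A`
  have hdet : A.det = (∏ k, (1 - g k)) * (1 + S) := by
    have hA' : A = diagonal (fun k => 1 - g k) *
        ((1 : Matrix (Fin N) (Fin N) ℝ) + replicateCol Unit (fun k => (1 - g k)⁻¹) * replicateRow Unit g) := by
      ext i j
      rw [diagonal_mul]
      simp only [Matrix.add_apply, one_apply, mul_apply, replicateCol_apply, replicateRow_apply, Finset.sum_const,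
        Finset.card_univ, Fintype.card_unit, one_smul, hA]
      by_cases h : i = j
      · subst h; simp only [if_pos rfl, eq_self_iff_true, if_true]; field_simp [hne i]; ring
      · rw [if_neg h, if_neg h]; field_simp [hne i]; ring
    have hdp : (g ⬝ᵥ fun k => (1 - g k)⁻¹) = S := by
      rw [hSdef, dotProduct]; simp [div_eq_mul_inv]
    rw [hA', det_mul, det_diagonal, det_one_add_replicateCol_mul_replicateRow, hdp]
  -- the explicit inverse of `A`
  obtain ⟨B, hBdef⟩ : ∃ B : Matrix (Fin N) (Fin N) ℝ, B = Matrix.of fun i j =>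
      (if i = j then 1 else 0) / (1 - g j) - g j / ((1 - g i) * (1 - g j) * (1 + S)) := ⟨_, rfl⟩
  have hBapp : ∀ i j, B i j =
      (if i = j then 1 else 0) / (1 - g j) - g j / ((1 - g i) * (1 - g j) * (1 + S)) := by
    intro i j; rw [hBdef]; rfl
  have hinv : A⁻¹ = B := by
    apply inv_eq_right_inv
    ext i j
    rw [mul_apply, one_apply]
    have hterm : ∀ k, A i k * B k j =
        (if k = i then (1 - g i) * B i j else 0) +
        ((if k = j then g k / (1 - g j) else 0)
          - (g j / ((1 - g j) * (1 + S))) * (g k / (1 - g k))) := by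
      intro k
      rw [hA, hBapp, hBapp]
      by_cases hk : k = i
      · subst hk
        simp only [if_pos rfl]
        by_cases hj : k = j
        · subst hj; simp only [if_pos rfl, eq_self_iff_true, if_true]; field_simp [hne k]; ring
        · simp only [if_neg hj, if_neg (fun h : k = j => hj h), eq_self_iff_true, if_true]; field_simp [hne k, hne j]; ring
      · rw [if_neg (fun h : i = k => hk h.symm), if_neg hk, zero_add]
        by_cases hj : k = j
        · subst hj; simp only [if_pos rfl, eq_self_iff_true, if_true]; field_simp [hne k, hne i]
        · simp only [if_neg hj]; field_simp [hne k, hne j, hne i]; ring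
    rw [Finset.sum_congr rfl fun k _ => hterm k]
    rw [Finset.sum_add_distrib, Finset.sum_ite_eq' univ i _, if_pos (mem_univ i),
      Finset.sum_sub_distrib, Finset.sum_ite_eq' univ j _, if_pos (mem_univ j),
      ← Finset.mul_sum, ← hSdef, hBapp]
    by_cases hij : i = j
    · subst hij
      simp only [eq_self_iff_true, if_true]
      exact aux_pos (g i) S (hne i) h1Sne
    · simp only [if_neg hij]
      exact aux_neg (g i) (g j) S (hne i) (hne j) h1Sne
  -- conclusion
  intro i
  have hP : 0 < ∏ k ∈ Finset.univ.erase i, (1 - g k) :=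
    Finset.prod_pos fun k _ => hpos k
  have hmain : A⁻¹ i i - 1 / (1 - g i) =
      -g i * (∏ k ∈ Finset.univ.erase i, (1 - g k)) / (A.det * (1 - g i)) := by
    rw [hinv, hBapp, hdet, ← Finset.mul_prod_erase univ _ (mem_univ i)]
    simp only [eq_self_iff_true, if_true]
    exact aux_main_s15 (g i) S _ (hne i) h1Sne (ne_of_gt hP)
  refine ⟨hmain, ?_⟩
  have hdetpos : 0 < A.det := by
    rw [hdet]
    exact mul_pos (Finset.prod_pos fun k _ => hpos k) h1S
  have hneg : -g i * (∏ k ∈ Finset.univ.erase i, (1 - g k)) / (A.det * (1 - g i)) < 0 := by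
    apply div_neg_of_neg_of_pos
    · exact mul_neg_of_neg_of_pos (neg_neg_of_pos (hg i).1) hP
    · exact mul_pos hdetpos (hpos i)
  linarith [hmain ▸ hneg]
end

section
/- Fix any integer N ≥ 2 and reals g_1, …, g_{N+1} ∈ (0,1). For each M ∈ {N, N+1}, let A_M = I_M + G_M, where G_M is the M×M matrix with zero diagonal and off-diagonal entries [G_M]_{i,j} = g_j for i ≠ j. Then det(A_{N+1}) = det(A_N) − g_{N+1} · Σ_{i=1}^{N} g_i · Π_{k ∈ {1,…,N}∖{i}} (1 − g_k). -/
open Matrix Finset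

lemma det_formula {M : ℕ} (g : Fin M → ℝ) (hg : ∀ i, 1 - g i ≠ 0)
    (A : Matrix (Fin M) (Fin M) ℝ) (hA : ∀ i j, A i j = if i = j then 1 else g j) :
    A.det = (∏ i, (1 - g i)) * (1 + ∑ i, g i * (1 - g i)⁻¹) := by
  have hrep : A = Matrix.diagonal (fun i => 1 - g i)
      + replicateCol Unit (fun _ => (1:ℝ)) * replicateRow Unit g := by
    ext i j
    simp only [hA, Matrix.add_apply, Matrix.diagonal_apply, Matrix.mul_apply, Matrix.replicateCol_apply,
      Matrix.replicateRow_apply, Finset.sum_const, Finset.card_univ, one_smul, one_mul,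
      smul_eq_mul]
    split_ifs with h <;> [subst h; skip] <;> simp
  have hdet : IsUnit (Matrix.diagonal (fun i => 1 - g i)).det := by
    rw [Matrix.det_diagonal]
    exact (Finset.prod_ne_zero_iff.2 fun i _ => hg i).isUnit
  rw [hrep, Matrix.det_add_replicateCol_mul_replicateRow hdet, Matrix.det_diagonal]
  rw [Matrix.det_unique]
  congr 1
  have hinv : (Matrix.diagonal (fun i => 1 - g i))⁻¹
      = Matrix.diagonal (fun i => (1 - g i)⁻¹) := by
    apply Matrix.inv_eq_right_inv
    rw [Matrix.diagonal_mul_diagonal]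
    have h1 : (fun i => (1 - g i) * (1 - g i)⁻¹) = fun _ : Fin M => (1:ℝ) :=
      funext fun i => mul_inv_cancel₀ (hg i)
    rw [h1]
    exact Matrix.diagonal_one
  rw [hinv]
  simp [Matrix.mul_apply, Matrix.replicateRow_apply, Matrix.replicateCol_apply, Matrix.diagonal_apply]

/-- determinant recursion from size `N` to size `N+1`. -/
theorem det_A_recursion (N : ℕ) (hN : 2 ≤ N) (g : Fin (N + 1) → ℝ)
    (hg : ∀ i, g i ∈ Set.Ioo (0 : ℝ) 1)
    (A : Matrix (Fin (N + 1)) (Fin (N + 1)) ℝ)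
    (hA : ∀ i j, A i j = if i = j then 1 else g j)
    (B : Matrix (Fin N) (Fin N) ℝ)
    (hB : ∀ i j, B i j = if i = j then 1 else g (Fin.castSucc j)) :
    A.det = B.det - g (Fin.last N) *
      ∑ i : Fin N, g (Fin.castSucc i) *
        ∏ k ∈ Finset.univ.erase i, (1 - g (Fin.castSucc k)) := by
  have hg' : ∀ i, 1 - g i ≠ 0 := fun i => sub_ne_zero.2 (hg i).2.ne'
  have hg'' : ∀ j : Fin N, 1 - g (Fin.castSucc j) ≠ 0 := fun j => hg' _
  rw [det_formula g hg' A hA, det_formula (fun j => g (Fin.castSucc j)) hg'' B hB]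
  set P := ∏ j : Fin N, (1 - g (Fin.castSucc j)) with hP
  set S := ∑ j : Fin N, g (Fin.castSucc j) * (1 - g (Fin.castSucc j))⁻¹ with hS
  have hprod : ∏ i : Fin (N + 1), (1 - g i) = P * (1 - g (Fin.last N)) := by
    rw [Fin.prod_univ_castSucc]
  have hsum : ∑ i : Fin (N + 1), g i * (1 - g i)⁻¹
      = S + g (Fin.last N) * (1 - g (Fin.last N))⁻¹ := by
    rw [Fin.sum_univ_castSucc]
  have herase : ∀ i : Fin N, ∏ k ∈ Finset.univ.erase i, (1 - g (Fin.castSucc k))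
      = P * (1 - g (Fin.castSucc i))⁻¹ := by
    intro i
    have h := Finset.prod_erase_mul Finset.univ (fun k => 1 - g (Fin.castSucc k))
      (Finset.mem_univ i)
    rw [hP, ← h, mul_assoc, mul_inv_cancel₀ (hg'' i), mul_one]
  have hsum2 : ∑ i : Fin N, g (Fin.castSucc i) *
      ∏ k ∈ Finset.univ.erase i, (1 - g (Fin.castSucc k)) = P * S := by
    rw [hS, Finset.mul_sum]
    refine Finset.sum_congr rfl fun i _ => ?_
    rw [herase i]; ring
  rw [hprod, hsum, hsum2]
  field_simp [hg' (Fin.last N)]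
  ring
end

section
/- Fix any integer N ≥ 2 and a real ḡ > 0 with (N−1)·ḡ < 1. Let f_1, …, f_N : ℝ → ℝ be functions each of which is Lipschitz with constant ḡ, i.e., |f_j(a) − f_j(b)| ≤ ḡ·|a − b| for all reals a, b. Define F : ℝ^N → ℝ^N by F_i(y) = y_i + Σ_{j ≠ i} f_j(y_j). Then for all y, y' ∈ ℝ^N, the inner product ⟨y − y', F(y) − F(y')⟩ is at least (1 − (N−1)·ḡ)·‖y − y'‖², where ‖·‖ is the Euclidean norm; in particular F is strongly monotone. -/
open Finset

/-- strong monotonicity of `F_i(y) = y_i + Σ_{j ≠ i} f_j(y_j)` when each `f_j`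
is Lipschitz with constant `ḡ` and `(N−1)·ḡ < 1`. -/
theorem strongly_monotone_F (N : ℕ) (hN : 2 ≤ N) (gbar : ℝ) (hgbar : 0 < gbar)
    (hsmall : ((N : ℝ) - 1) * gbar < 1)
    (f : Fin N → ℝ → ℝ)
    (hf : ∀ j : Fin N, ∀ a b : ℝ, |f j a - f j b| ≤ gbar * |a - b|)
    (F : EuclideanSpace ℝ (Fin N) → EuclideanSpace ℝ (Fin N))
    (hF : ∀ y : EuclideanSpace ℝ (Fin N), ∀ i : Fin N,
      F y i = y i + ∑ j ∈ Finset.univ.erase i, f j (y j)) :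
    (∀ y y' : EuclideanSpace ℝ (Fin N),
      (1 - ((N : ℝ) - 1) * gbar) * ‖y - y'‖ ^ 2 ≤ inner ℝ (y - y') (F y - F y')) ∧
    ∃ c : ℝ, 0 < c ∧ ∀ y y' : EuclideanSpace ℝ (Fin N),
      c * ‖y - y'‖ ^ 2 ≤ inner ℝ (y - y') (F y - F y') := by
  have key : ∀ y y' : EuclideanSpace ℝ (Fin N),
      (1 - ((N : ℝ) - 1) * gbar) * ‖y - y'‖ ^ 2 ≤ inner ℝ (y - y') (F y - F y') := by
    intro y y'
    set d : Fin N → ℝ := fun i => y i - y' i with hd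
    set e : Fin N → ℝ := fun j => f j (y j) - f j (y' j) with he
    set S : ℝ := ∑ i, d i ^ 2 with hS
    have hnorm : ‖y - y'‖ ^ 2 = S := by
      rw [← real_inner_self_eq_norm_sq, PiLp.inner_apply]
      simp [hS, sq, d]
    have hinner : (inner ℝ (y - y') (F y - F y') : ℝ)
        = S + ∑ i, d i * ∑ j ∈ Finset.univ.erase i, e j := by
      rw [PiLp.inner_apply]
      have : ∀ i : Fin N, (inner ℝ ((y - y') i) ((F y - F y') i) : ℝ)
          = d i ^ 2 + d i * ∑ j ∈ Finset.univ.erase i, e j := by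
        intro i
        have h1 : (F y - F y') i = d i + ∑ j ∈ Finset.univ.erase i, e j := by
          simp only [PiLp.sub_apply, hF, hd, he]
          rw [Finset.sum_sub_distrib]
          ring
        have h2 : (y - y') i = d i := rfl
        rw [h1, h2, real_inner_comm]
        simp [RCLike.inner_apply]
        ring
      rw [Finset.sum_congr rfl fun i _ => this i, Finset.sum_add_distrib]
    have hfe : ∀ j : Fin N, |e j| ≤ gbar * |d j| := fun j => hf j (y j) (y' j)
    clear_value d e S
    rw [hinner, hnorm]
    have hbound : ∀ i : Fin N,
        -(gbar * ∑ j ∈ Finset.univ.erase i, (d i ^ 2 + d j ^ 2) / 2)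
          ≤ d i * ∑ j ∈ Finset.univ.erase i, e j := by
      intro i
      have habs : |d i * ∑ j ∈ Finset.univ.erase i, e j|
          ≤ gbar * ∑ j ∈ Finset.univ.erase i, (d i ^ 2 + d j ^ 2) / 2 := by
        rw [abs_mul]
        calc |d i| * |∑ j ∈ Finset.univ.erase i, e j|
            ≤ |d i| * ∑ j ∈ Finset.univ.erase i, gbar * |d j| := by
              apply mul_le_mul_of_nonneg_left _ (abs_nonneg _)
              refine (Finset.abs_sum_le_sum_abs _ _).trans ?_
              exact Finset.sum_le_sum fun j _ => hfe j
          _ = gbar * ∑ j ∈ Finset.univ.erase i, |d i| * |d j| := by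
              rw [Finset.mul_sum, Finset.mul_sum]; apply Finset.sum_congr rfl
              intro j _; ring
          _ ≤ gbar * ∑ j ∈ Finset.univ.erase i, (d i ^ 2 + d j ^ 2) / 2 := by
              apply mul_le_mul_of_nonneg_left _ hgbar.le
              apply Finset.sum_le_sum
              intro j _
              have h2 : 2 * |d i| * |d j| ≤ |d i| ^ 2 + |d j| ^ 2 :=
                two_mul_le_add_sq _ _
              rw [sq_abs, sq_abs] at h2
              linarith
      linarith [neg_abs_le (d i * ∑ j ∈ Finset.univ.erase i, e j), habs]
    have hsum : ∑ i, gbar * ∑ j ∈ Finset.univ.erase i, (d i ^ 2 + d j ^ 2) / 2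
        = ((N : ℝ) - 1) * gbar * S := by
      have : ∀ i : Fin N, ∑ j ∈ Finset.univ.erase i, (d i ^ 2 + d j ^ 2) / 2
          = (((N : ℝ) - 1) * d i ^ 2 + (S - d i ^ 2)) / 2 := by
        intro i
        have h1 : ∑ j ∈ Finset.univ.erase i, (d i ^ 2 + d j ^ 2) / 2
            = ∑ j ∈ Finset.univ.erase i, d i ^ 2 / 2
              + ∑ j ∈ Finset.univ.erase i, d j ^ 2 / 2 := by
          rw [← Finset.sum_add_distrib]
          exact Finset.sum_congr rfl fun j _ => by ring
        have h2 : ∑ j ∈ Finset.univ.erase i, d j ^ 2 / 2 = S / 2 - d i ^ 2 / 2 := by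
          rw [Finset.sum_erase_eq_sub (Finset.mem_univ i), ← Finset.sum_div, ← hS]
        rw [h1, h2, Finset.sum_const, Finset.card_erase_of_mem (Finset.mem_univ i),
          Finset.card_univ, Fintype.card_fin, nsmul_eq_mul]
        push_cast [Nat.cast_sub (by omega : 1 ≤ N)]
        ring
      rw [Finset.sum_congr rfl fun i _ => congrArg (gbar * ·) (this i)]
      rw [← Finset.mul_sum]
      have : ∑ i, (((N : ℝ) - 1) * d i ^ 2 + (S - d i ^ 2)) / 2
          = ((N : ℝ) - 1) * S := by
        have e1 : ∀ i : Fin N, (((N : ℝ) - 1) * d i ^ 2 + (S - d i ^ 2)) / 2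
            = ((N : ℝ) - 2) / 2 * d i ^ 2 + S / 2 := fun i => by ring
        rw [Finset.sum_congr rfl fun i _ => e1 i, Finset.sum_add_distrib,
          ← Finset.mul_sum, ← hS, Finset.sum_const, Finset.card_univ,
          Fintype.card_fin, nsmul_eq_mul]
        ring
      rw [this]; ring
    have : -(((N : ℝ) - 1) * gbar * S) ≤ ∑ i, d i * ∑ j ∈ Finset.univ.erase i, e j := by
      rw [← hsum, ← Finset.sum_neg_distrib]
      exact Finset.sum_le_sum fun i _ => hbound i
    linarith
  exact ⟨key, 1 - ((N : ℝ) - 1) * gbar, by linarith, key⟩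
end

section
/- Let L be a nonempty finite index set and i ∈ L. Suppose for each j ∈ L we are given reals λ_j > 1 and x_j > φ(λ_j). Then exp(−x_i) · Π_{j ∈ L∖{i}} [ exp(−x_j) + (1 − exp(−x_j))·exp(−λ_j·h(x_j; λ_j)) ] = exp( −Σ_{j ∈ L} x_j + Σ_{j ∈ L∖{i}} φ(λ_j) ). -/
open Finset

lemma factor_eq {l x : ℝ} (hl : 1 < l) (hx : phi l < x) :
    Real.exp (-x) + (1 - Real.exp (-x)) * Real.exp (-l * h x l)
      = Real.exp (-x + phi l) := by
  have hl1 : (0:ℝ) < l - 1 := by linarith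
  have hl0 : (0:ℝ) < l := by linarith
  have hphi : 0 < phi l := Real.log_pos (by rw [lt_div_iff₀ hl1]; linarith)
  have hx0 : 0 < x := lt_trans hphi hx
  have hex : 1 < Real.exp x := by rw [← Real.exp_zero]; exact Real.exp_lt_exp.2 hx0
  have harg : 0 < (l - 1) * (Real.exp x - 1) := mul_pos hl1 (by linarith)
  have h1 : Real.exp (-l * h x l) = ((l - 1) * (Real.exp x - 1))⁻¹ := by
    rw [h]
    rw [show -l * ((1 / l) * Real.log ((l - 1) * (Real.exp x - 1)))
        = -Real.log ((l - 1) * (Real.exp x - 1)) by field_simp]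
    rw [Real.exp_neg, Real.exp_log harg]
  have h2 : Real.exp (phi l) = l / (l - 1) := Real.exp_log (by positivity)
  rw [h1, Real.exp_add, h2, Real.exp_neg]
  have he0 : (0:ℝ) < Real.exp x := Real.exp_pos x
  have hne : Real.exp x - 1 ≠ 0 := by linarith
  field_simp
  ring

/-- probability-of-being-uninformed product identity inside an echo chamber. -/
theorem uninformed_prob_identity {ι : Type*} [DecidableEq ι] (L : Finset ι) (i : ι)
    (hi : i ∈ L) (lam x : ι → ℝ)
    (hlam : ∀ j ∈ L, 1 < lam j) (hx : ∀ j ∈ L, phi (lam j) < x j) :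
    Real.exp (-x i) *
      ∏ j ∈ L.erase i,
        (Real.exp (-x j) + (1 - Real.exp (-x j)) * Real.exp (-(lam j) * h (x j) (lam j)))
    = Real.exp (-∑ j ∈ L, x j + ∑ j ∈ L.erase i, phi (lam j)) := by
  have hprod : ∏ j ∈ L.erase i,
      (Real.exp (-x j) + (1 - Real.exp (-x j)) * Real.exp (-(lam j) * h (x j) (lam j)))
      = ∏ j ∈ L.erase i, Real.exp (-x j + phi (lam j)) := by
    refine Finset.prod_congr rfl fun j hj => ?_
    have hjL := Finset.mem_of_mem_erase hj
    exact factor_eq (hlam j hjL) (hx j hjL)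
  rw [hprod, ← Real.exp_sum, ← Real.exp_add]
  congr 1
  rw [Finset.sum_add_distrib]
  have : ∑ j ∈ L, x j = x i + ∑ j ∈ L.erase i, x j :=
    (Finset.add_sum_erase L x hi).symm
  rw [this, Finset.sum_neg_distrib]
  ring
end
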